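/- arXiv:1609.00971 — 3 statements merged into one kernel-verified Lean document; each statement's English description precedes it below -/
import Mathlib

section
/- For real numbers x, y with |x| ≤ π/2, one has |sin(x+iy)| ≥ (√2/π)·|x+iy|. -/
open Complex Real

theorem stmt_0 (x y : ℝ) (hx : |x| ≤ Real.pi / 2) :
    Real.sqrt 2 / Real.pi * ‖(x + y * Complex.I : ℂ)‖ ≤
      ‖Complex.sin (x + y * Complex.I)‖ := by
  have hπ : (0:ℝ) < Real.pi := Real.pi_pos
  have h1 : (‖Complex.sin (x + y * Complex.I)‖)^2
      = Real.sin x ^ 2 + Real.sinh y ^ 2 := by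
    have he : Complex.sin ((x:ℂ) + y * Complex.I)
        = ((Real.sin x * Real.cosh y : ℝ) : ℂ) + ((Real.cos x * Real.sinh y : ℝ) : ℂ) * Complex.I := by
      rw [Complex.sin_add_mul_I]
      push_cast
      ring
    rw [he, Complex.sq_norm, Complex.normSq_add_mul_I]
    nlinarith [Real.sin_sq_add_cos_sq x, Real.cosh_sq y]
  have h2 : (‖((x:ℂ) + y * Complex.I)‖)^2 = x^2 + y^2 := by
    rw [Complex.sq_norm, Complex.normSq_add_mul_I]
  have hsin : 2 / Real.pi * |x| ≤ |Real.sin x| := Real.mul_abs_le_abs_sin hx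
  have hsinh : |y| ≤ |Real.sinh y| := by
    rcases le_or_gt 0 y with h | h
    · rw [_root_.abs_of_nonneg h, _root_.abs_of_nonneg (Real.sinh_nonneg_iff.2 h)]
      exact Real.self_le_sinh_iff.2 h
    · rw [abs_of_neg h, abs_of_neg (Real.sinh_neg_iff.2 h)]
      exact neg_le_neg (Real.sinh_le_self_iff.2 h.le)
  have hπ2 : (2:ℝ) ≤ Real.pi ^ 2 := by nlinarith [Real.pi_gt_three]
  have hsin' : 2 * |x| ≤ Real.pi * |Real.sin x| := by
    have h := mul_le_mul_of_nonneg_left hsin hπ.le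
    calc 2 * |x| = Real.pi * (2 / Real.pi * |x|) := by field_simp
      _ ≤ Real.pi * |Real.sin x| := h
  have hx2' : 2 * x^2 ≤ Real.sin x ^ 2 * Real.pi ^ 2 := by
    have h4 := mul_self_le_mul_self (by positivity : (0:ℝ) ≤ 2 * |x|) hsin'
    nlinarith [abs_mul_abs_self x, abs_mul_abs_self (Real.sin x), sq_nonneg x]
  have hy2' : 2 * y^2 ≤ Real.sinh y ^ 2 * Real.pi ^ 2 := by
    have h5 := mul_self_le_mul_self (abs_nonneg y) hsinh
    rw [abs_mul_abs_self, abs_mul_abs_self] at h5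
    nlinarith [sq_nonneg y]
  have hsq : (Real.sqrt 2 / Real.pi * ‖((x:ℂ) + y * Complex.I)‖)^2
      ≤ (‖Complex.sin (x + y * Complex.I)‖)^2 := by
    rw [h1, mul_pow, div_pow, Real.sq_sqrt (by norm_num : (0:ℝ) ≤ 2), h2,
      div_mul_eq_mul_div, div_le_iff₀ (by positivity : (0:ℝ) < Real.pi ^ 2)]
    nlinarith [hx2', hy2']
  have h0 : (0:ℝ) ≤ Real.sqrt 2 / Real.pi * ‖((x:ℂ) + y * Complex.I)‖ := by
    positivity
  have hA : (0:ℝ) ≤ ‖Complex.sin (x + y * Complex.I)‖ :=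
    norm_nonneg _
  calc Real.sqrt 2 / Real.pi * ‖((x:ℂ) + y * Complex.I)‖
      = Real.sqrt ((Real.sqrt 2 / Real.pi * ‖((x:ℂ) + y * Complex.I)‖)^2) :=
        (Real.sqrt_sq h0).symm
    _ ≤ Real.sqrt ((‖Complex.sin (x + y * Complex.I)‖)^2) :=
        Real.sqrt_le_sqrt hsq
    _ = ‖Complex.sin (x + y * Complex.I)‖ := Real.sqrt_sq hA
end

section
/- For real x, y with |y| ≤ 1 and (x,y) ≠ (0,0), |Im(sin(x+iy)/(x+iy))| ≤ 2·|y|·min(|x|, 2/|x+iy|). -/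
open Complex Real


lemma sinh_le_mul_cosh' {y : ℝ} (hy : 0 ≤ y) : Real.sinh y ≤ y * Real.cosh y := by
  have hmono : MonotoneOn (fun t : ℝ => t * Real.cosh t - Real.sinh t) (Set.Ici 0) := by
    apply monotoneOn_of_deriv_nonneg (convex_Ici 0)
    · fun_prop
    · fun_prop
    · intro t ht
      have h1 : HasDerivAt (fun t : ℝ => t * Real.cosh t - Real.sinh t)
          (1 * Real.cosh t + t * Real.sinh t - Real.cosh t) t :=
        ((hasDerivAt_id t).mul (Real.hasDerivAt_cosh t)).sub (Real.hasDerivAt_sinh t)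
      rw [h1.deriv]
      have ht' : 0 < t := by simpa using ht
      nlinarith [Real.sinh_nonneg_iff.2 ht'.le]
  have := hmono (Set.self_mem_Ici) (Set.mem_Ici.2 hy) hy
  simp at this
  linarith

lemma cosh_le_one_add_sq' {y : ℝ} (hy0 : 0 ≤ y) (hy : y ≤ 1) : Real.cosh y ≤ 1 + y ^ 2 := by
  have hmono : MonotoneOn (fun t : ℝ => (t ^ 2 / 2) * Real.cosh t - Real.cosh t + 1) (Set.Ici 0) := by
    apply monotoneOn_of_deriv_nonneg (convex_Ici 0)
    · fun_prop
    · fun_prop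
    · intro t ht
      have h1 : HasDerivAt (fun t : ℝ => (t ^ 2 / 2) * Real.cosh t - Real.cosh t + 1)
          ((2 : ℕ) * t ^ (2 - 1) / 2 * Real.cosh t + t ^ 2 / 2 * Real.sinh t - Real.sinh t) t :=
        ((((hasDerivAt_pow 2 t).div_const 2).mul (Real.hasDerivAt_cosh t)).sub
          (Real.hasDerivAt_cosh t)).add_const 1
      rw [h1.deriv]
      have ht' : 0 < t := by simpa using ht
      have h2 : Real.sinh t ≤ t * Real.cosh t := sinh_le_mul_cosh' ht'.le
      have h3 : 0 ≤ Real.sinh t := Real.sinh_nonneg_iff.2 ht'.le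
      simp only [pow_one, Nat.cast_ofNat]
      nlinarith
  have := hmono (Set.self_mem_Ici) (Set.mem_Ici.2 hy0) hy0
  simp at this
  have hu : (0:ℝ) < 1 - y ^ 2 / 2 := by nlinarith
  have h4 : y ^ 2 ≤ 1 := by nlinarith
  refine (mul_le_mul_iff_of_pos_right hu).1 ?_
  nlinarith [this, mul_nonneg (sq_nonneg y) (sub_nonneg.2 h4)]

lemma keyN (x y : ℝ) (hx : 0 ≤ x) (hy0 : 0 ≤ y) (hy : y ≤ 1) :
    |x * Real.cos x * Real.sinh y - y * Real.sin x * Real.cosh y|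
      ≤ 2 * x * y * (x ^ 2 + y ^ 2) := by
  have hs0 : 0 ≤ Real.sinh y := Real.sinh_nonneg_iff.2 hy0
  have hs1 : y ≤ Real.sinh y := Real.self_le_sinh_iff.2 hy0
  have hs2 : Real.sinh y ≤ y * Real.cosh y := sinh_le_mul_cosh' hy0
  have hC0 : (0:ℝ) ≤ Real.cosh y := (Real.cosh_pos y).le
  have hC1 : 1 ≤ Real.cosh y := Real.one_le_cosh y
  have hC2 : Real.cosh y ≤ 1 + y ^ 2 := cosh_le_one_add_sq' hy0 hy
  have hC3 : Real.cosh y ≤ 2 := by nlinarith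
  have hs3 : Real.sinh y ≤ 2 * y := by nlinarith [mul_le_mul_of_nonneg_left hC3 hy0]
  have hsinx : Real.sin x ≤ x := Real.sin_le hx
  have hcos1 : Real.cos x ≤ 1 := Real.cos_le_one x
  have hcos1' : -1 ≤ Real.cos x := Real.neg_one_le_cos x
  rw [abs_le]
  rcases le_or_gt x (3 / 2) with hx32 | hx32
  · have hpi : (3:ℝ) < π := Real.pi_gt_three
    have hsin0 : 0 ≤ Real.sin x := Real.sin_nonneg_of_nonneg_of_le_pi hx (by linarith)
    have hcos0 : 0 ≤ Real.cos x := Real.cos_nonneg_of_mem_Icc ⟨by linarith, by linarith⟩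
    rcases le_or_gt 1 (x ^ 2 + y ^ 2) with hQ | hQ
    · have t1 : 0 ≤ x * Real.cos x * Real.sinh y := by positivity
      have t2 : 0 ≤ y * Real.sin x * Real.cosh y := by positivity
      have t1' : x * Real.cos x * Real.sinh y ≤ 2 * (x * y) := by
        have a1 : x * Real.cos x * Real.sinh y ≤ x * Real.sinh y :=
          mul_le_mul_of_nonneg_right (mul_le_of_le_one_right hx hcos1) hs0
        have a2 : x * Real.sinh y ≤ x * (2 * y) := mul_le_mul_of_nonneg_left hs3 hx
        linarith
      have t2' : y * Real.sin x * Real.cosh y ≤ 2 * (x * y) := by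
        have a1 : y * Real.sin x * Real.cosh y ≤ y * x * Real.cosh y :=
          mul_le_mul_of_nonneg_right (mul_le_mul_of_nonneg_left hsinx hy0) hC0
        have a2 : y * x * Real.cosh y ≤ y * x * 2 :=
          mul_le_mul_of_nonneg_left hC3 (mul_nonneg hy0 hx)
        linarith
      have r : 2 * (x * y) * 1 ≤ 2 * (x * y) * (x ^ 2 + y ^ 2) :=
        mul_le_mul_of_nonneg_left hQ (by positivity)
      constructor <;> linarith
    · have hx1 : x ≤ 1 := by nlinarith
      rcases eq_or_lt_of_le hx with hx0 | hx0
      · simp [← hx0]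
      · have hsinlb : x - x ^ 3 / 4 ≤ Real.sin x := by nlinarith [Real.sin_gt_sub_cube hx0, pow_pos hx0 3]
        have hcoslb : 1 - x ^ 2 / 2 ≤ Real.cos x := Real.one_sub_sq_div_two_le_cos
        have p1 : (0:ℝ) ≤ x * y * x ^ 2 := by positivity
        have p2 : (0:ℝ) ≤ x * y * y ^ 2 := by positivity
        constructor
        · have e4 : x * (1 - x ^ 2 / 2) * Real.sinh y ≤ x * Real.cos x * Real.sinh y :=
            mul_le_mul_of_nonneg_right (mul_le_mul_of_nonneg_left hcoslb hx) hs0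
          have e5 : x * (1 - x ^ 2 / 2) * y ≤ x * (1 - x ^ 2 / 2) * Real.sinh y :=
            mul_le_mul_of_nonneg_left hs1 (by nlinarith)
          have e6 : y * Real.sin x * Real.cosh y ≤ y * x * (1 + y ^ 2) :=
            mul_le_mul (mul_le_mul_of_nonneg_left hsinx hy0) hC2 hC0 (by positivity)
          nlinarith [e4, e5, e6]
        · have e1 : x * Real.cos x * Real.sinh y ≤ x * (y * Real.cosh y) :=
            mul_le_mul (mul_le_of_le_one_right hx hcos1) hs2 hs0 hx
          have e3 : y * (x - x ^ 3 / 4) * Real.cosh y ≤ y * Real.sin x * Real.cosh y :=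
            mul_le_mul_of_nonneg_right (mul_le_mul_of_nonneg_left hsinlb hy0) hC0
          have p3 : x ^ 3 * y * Real.cosh y ≤ x ^ 3 * y * 2 :=
            mul_le_mul_of_nonneg_left hC3 (by positivity)
          nlinarith [e1, e3, p3]
  · -- x ≥ 3/2
    have hsin1 : Real.sin x ≤ 1 := Real.sin_le_one x
    have hsin1' : -1 ≤ Real.sin x := Real.neg_one_le_sin x
    have w1 : x * Real.cos x * Real.sinh y ≤ x * Real.sinh y :=
      mul_le_mul_of_nonneg_right (mul_le_of_le_one_right hx hcos1) hs0
    have w2 : x * (-1) * Real.sinh y ≤ x * Real.cos x * Real.sinh y :=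
      mul_le_mul_of_nonneg_right (mul_le_mul_of_nonneg_left hcos1' hx) hs0
    have q1 : x * Real.sinh y ≤ x * (2 * y) := mul_le_mul_of_nonneg_left hs3 hx
    have u1 : y * Real.sin x * Real.cosh y ≤ y * 1 * Real.cosh y :=
      mul_le_mul_of_nonneg_right (mul_le_mul_of_nonneg_left hsin1 hy0) hC0
    have u1' : y * (-1) * Real.cosh y ≤ y * Real.sin x * Real.cosh y :=
      mul_le_mul_of_nonneg_right (mul_le_mul_of_nonneg_left hsin1' hy0) hC0
    have u2 : y * Real.cosh y ≤ y * 2 := mul_le_mul_of_nonneg_left hC3 hy0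
    have hx3 : x + 1 ≤ x * (x ^ 2 + y ^ 2) := by
      have c1 : x ^ 2 * (3 / 2) ≤ x ^ 2 * x := mul_le_mul_of_nonneg_left hx32.le (sq_nonneg x)
      have c2 : x * (3 / 2) ≤ x * x := mul_le_mul_of_nonneg_left hx32.le hx
      have c3 : (0:ℝ) ≤ x * y ^ 2 := mul_nonneg hx (sq_nonneg y)
      linarith [c1, c2, c3, hx32.le]
    have r : 2 * y * (x + 1) ≤ 2 * y * (x * (x ^ 2 + y ^ 2)) :=
      mul_le_mul_of_nonneg_left hx3 (by positivity)
    constructor <;> linarith [w1, w2, q1, u1, u1', u2, r]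

lemma keyN2 (x y : ℝ) (hx : 0 ≤ x) (hy0 : 0 ≤ y) (hy : y ≤ 1) :
    |x * Real.cos x * Real.sinh y - y * Real.sin x * Real.cosh y| ≤ 4 * (x * y) := by
  have hs0 : 0 ≤ Real.sinh y := Real.sinh_nonneg_iff.2 hy0
  have hs2 : Real.sinh y ≤ y * Real.cosh y := sinh_le_mul_cosh' hy0
  have hC0 : (0:ℝ) ≤ Real.cosh y := (Real.cosh_pos y).le
  have hC1 : 1 ≤ Real.cosh y := Real.one_le_cosh y
  have hC2 : Real.cosh y ≤ 1 + y ^ 2 := cosh_le_one_add_sq' hy0 hy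
  have hC3 : Real.cosh y ≤ 2 := by nlinarith
  have hs3 : Real.sinh y ≤ 2 * y := by nlinarith [mul_le_mul_of_nonneg_left hC3 hy0]
  have habs : |Real.sin x| ≤ x := Real.abs_sin_le_abs.trans_eq (_root_.abs_of_nonneg hx)
  have h1 := abs_le.1 habs
  have hcos1 : Real.cos x ≤ 1 := Real.cos_le_one x
  have hcos1' : -1 ≤ Real.cos x := Real.neg_one_le_cos x
  have w1 : x * Real.cos x * Real.sinh y ≤ x * Real.sinh y :=
    mul_le_mul_of_nonneg_right (mul_le_of_le_one_right hx hcos1) hs0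
  have w2 : x * (-1) * Real.sinh y ≤ x * Real.cos x * Real.sinh y :=
    mul_le_mul_of_nonneg_right (mul_le_mul_of_nonneg_left hcos1' hx) hs0
  have q1 : x * Real.sinh y ≤ x * (2 * y) := mul_le_mul_of_nonneg_left hs3 hx
  have u1 : y * Real.sin x * Real.cosh y ≤ y * x * Real.cosh y :=
    mul_le_mul_of_nonneg_right (mul_le_mul_of_nonneg_left h1.2 hy0) hC0
  have u1' : y * (-x) * Real.cosh y ≤ y * Real.sin x * Real.cosh y :=
    mul_le_mul_of_nonneg_right (mul_le_mul_of_nonneg_left h1.1 hy0) hC0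
  have u2 : y * x * Real.cosh y ≤ y * x * 2 :=
    mul_le_mul_of_nonneg_left hC3 (mul_nonneg hy0 hx)
  rw [abs_le]
  constructor <;> linarith [w1, w2, q1, u1, u1', u2]

theorem stmt_4 (x y : ℝ) (hy : |y| ≤ 1) (h : ¬(x = 0 ∧ y = 0)) :
    |(Complex.sin (x + y * Complex.I) / (x + y * Complex.I)).im| ≤
      2 * |y| * min |x| (2 / ‖(x + y * Complex.I : ℂ)‖) := by
  have hQ : 0 < x ^ 2 + y ^ 2 := by
    rcases not_and_or.1 h with hx | hy' <;> positivity
  have him : (Complex.sin (x + y * Complex.I) / (x + y * Complex.I)).im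
      = (Real.cos x * Real.sinh y * x - Real.sin x * Real.cosh y * y) / (x ^ 2 + y ^ 2) := by
    rw [Complex.div_im, Complex.sin_add_mul_I, Complex.normSq_add_mul_I]
    simp [← Complex.ofReal_sin, ← Complex.ofReal_cos, ← Complex.ofReal_sinh,
      ← Complex.ofReal_cosh]
    ring
  have habsz : ‖(x + y * Complex.I : ℂ)‖ = Real.sqrt (x ^ 2 + y ^ 2) := by
    rw [Complex.norm_def, Complex.normSq_add_mul_I]
  have hNabs : |Real.cos x * Real.sinh y * x - Real.sin x * Real.cosh y * y|
      = _root_.abs (|x| * Real.cos |x| * Real.sinh |y| - |y| * Real.sin |x| * Real.cosh |y|) := by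
    rw [eq_comm, abs_eq_abs]
    rcases abs_cases x with ⟨hx1, _⟩ | ⟨hx1, _⟩ <;> rcases abs_cases y with ⟨hy1, _⟩ | ⟨hy1, _⟩ <;>
      rw [hx1, hy1] <;>
      try simp only [Real.sin_neg, Real.cos_neg, Real.sinh_neg, Real.cosh_neg]
    · left; ring
    · right; ring
    · right; ring
    · left; ring
  have key1 := keyN |x| |y| (abs_nonneg x) (abs_nonneg y) hy
  have key2 := keyN2 |x| |y| (abs_nonneg x) (abs_nonneg y) hy
  rw [_root_.sq_abs, _root_.sq_abs] at key1
  rw [him, habsz, abs_div, abs_of_pos hQ]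
  have hs : Real.sqrt (x ^ 2 + y ^ 2) * Real.sqrt (x ^ 2 + y ^ 2) = x ^ 2 + y ^ 2 :=
    Real.mul_self_sqrt hQ.le
  have hspos : 0 < Real.sqrt (x ^ 2 + y ^ 2) := Real.sqrt_pos.2 hQ
  have hxle : |x| ≤ Real.sqrt (x ^ 2 + y ^ 2) := by
    rw [← Real.sqrt_sq_eq_abs]
    exact Real.sqrt_le_sqrt (by nlinarith [sq_nonneg y])
  rw [mul_min_of_nonneg _ _ (by positivity : (0:ℝ) ≤ 2 * |y|)]
  refine le_min ?_ ?_
  · rw [div_le_iff₀ hQ, hNabs]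
    nlinarith [key1]
  · rw [div_le_iff₀ hQ, hNabs]
    have h2 : 2 * |y| * (2 / Real.sqrt (x ^ 2 + y ^ 2)) * (x ^ 2 + y ^ 2)
        = 4 * |y| * Real.sqrt (x ^ 2 + y ^ 2) := by
      field_simp
      rw [Real.sq_sqrt hQ.le]; ring
    rw [h2]
    have h3 : 4 * (|x| * |y|) ≤ 4 * |y| * Real.sqrt (x ^ 2 + y ^ 2) := by
      nlinarith [mul_le_mul_of_nonneg_right hxle (abs_nonneg y)]
    linarith [key2]
end

section
/- Let 0 < ε ≤ 1 and let x, y be real with |εx| ≤ π and |y| ≤ 2. Then |sin((x+iy)/2) / ((1/ε)·sin(ε(x+iy)/2))| ≤ 4·min(1, 2/|x|), where for x = 0 the minimum is interpreted as 4. -/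
open Complex Real

lemma sq_abs_sin_aux (a b : ℝ) :
    (‖Complex.sin ((a : ℂ) + (b : ℂ) * Complex.I)‖) ^ 2 =
      Real.sin a ^ 2 + Real.sinh b ^ 2 := by
  have h : Complex.sin ((a : ℂ) + (b : ℂ) * Complex.I) =
      ((Real.sin a * Real.cosh b : ℝ) : ℂ) + ((Real.cos a * Real.sinh b : ℝ) : ℂ) * Complex.I := by
    rw [Complex.sin_add, Complex.cos_mul_I, Complex.sin_mul_I]
    push_cast
    ring
  rw [h, Complex.sq_norm, Complex.normSq_add_mul_I]
  nlinarith [Real.sin_sq_add_cos_sq a, Real.cosh_sq b]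

lemma sinh_le_mul_exp {t : ℝ} (ht : 0 ≤ t) : Real.sinh t ≤ t * Real.exp t := by
  rw [Real.sinh_eq]
  have h1 : (-t + 1) * Real.exp t ≤ Real.exp (-t) * Real.exp t :=
    mul_le_mul_of_nonneg_right (Real.add_one_le_exp (-t)) (Real.exp_pos t).le
  rw [← Real.exp_add, neg_add_cancel, Real.exp_zero] at h1
  have h2 : 1 - t ≤ Real.exp (-t) := by linarith [Real.add_one_le_exp (-t)]
  have h3 : t * 1 ≤ t * Real.exp t :=
    mul_le_mul_of_nonneg_left (Real.one_le_exp ht) ht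
  nlinarith

set_option maxHeartbeats 1000000 in
theorem stmt_7 (ε x y : ℝ) (hε0 : 0 < ε) (hε1 : ε ≤ 1)
    (hx : |ε * x| ≤ Real.pi) (hy : |y| ≤ 2) :
    ‖Complex.sin ((x + y * Complex.I) / 2) /
        ((1 / (ε : ℂ)) * Complex.sin ((ε : ℂ) * (x + y * Complex.I) / 2))‖ ≤
      4 * (if x = 0 then 1 else min 1 (2 / |x|)) := by
  have hπ : (3.14 : ℝ) < Real.pi := by linarith [Real.pi_gt_d2]
  have hπ' : Real.pi < 3.15 := by linarith [Real.pi_lt_d2]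
  have hπpos : (0:ℝ) < Real.pi := by linarith
  set A := ‖Complex.sin ((x + y * Complex.I) / 2)‖ with hA
  set B := ‖Complex.sin ((ε : ℂ) * (x + y * Complex.I) / 2)‖ with hB
  have hz1 : ((x : ℂ) + (y : ℂ) * Complex.I) / 2 = ((x/2 : ℝ) : ℂ) + ((y/2 : ℝ) : ℂ) * Complex.I := by
    push_cast; ring
  have hz2 : (ε : ℂ) * ((x : ℂ) + (y : ℂ) * Complex.I) / 2 =
      ((ε*x/2 : ℝ) : ℂ) + ((ε*y/2 : ℝ) : ℂ) * Complex.I := by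
    push_cast; ring
  have hA2 : A ^ 2 = Real.sin (x/2) ^ 2 + Real.sinh (y/2) ^ 2 := by
    rw [hA, hz1, sq_abs_sin_aux]
  have hB2 : B ^ 2 = Real.sin (ε*x/2) ^ 2 + Real.sinh (ε*y/2) ^ 2 := by
    rw [hB, hz2, sq_abs_sin_aux]
  have hLHS : ‖Complex.sin ((x + y * Complex.I) / 2) /
        ((1 / (ε : ℂ)) * Complex.sin ((ε : ℂ) * (x + y * Complex.I) / 2))‖ =
      A / ((1/ε) * B) := by
    rw [norm_div, norm_mul, norm_div, norm_one, Complex.norm_real, Real.norm_eq_abs, abs_of_pos hε0]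
  rw [hLHS]
  have hA0 : 0 ≤ A := norm_nonneg _
  have hB0 : 0 ≤ B := norm_nonneg _
  clear_value A B
  -- upper bounds on A²
  have hsin1 : Real.sin (x/2) ^ 2 ≤ (x/2) ^ 2 := Real.sin_sq_le_sq
  have hsin2 : Real.sin (x/2) ^ 2 ≤ 1 := by
    nlinarith [Real.neg_one_le_sin (x/2), Real.sin_le_one (x/2)]
  have hexp1 : Real.exp 1 < 2.7182818286 := Real.exp_one_lt_d9
  have hsinh_abs : Real.sinh (y/2) ^ 2 = Real.sinh (|y|/2) ^ 2 := by
    rcases abs_cases y with ⟨h, _⟩ | ⟨h, _⟩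
    · rw [h]
    · rw [h, show -y/2 = -(y/2) by ring, Real.sinh_neg]; ring
  have hynn : (0:ℝ) ≤ |y| := abs_nonneg y
  have hsnn : 0 ≤ Real.sinh (|y|/2) := by
    rw [← Real.sinh_zero]; exact Real.sinh_le_sinh.2 (by positivity)
  have hsinh_up : Real.sinh (y/2) ^ 2 ≤ (2.72 : ℝ)^2 * (y/2) ^ 2 := by
    have h1 : Real.sinh (|y|/2) ≤ (|y|/2) * Real.exp (|y|/2) :=
      sinh_le_mul_exp (by positivity)
    have h2 : Real.exp (|y|/2) ≤ Real.exp 1 := Real.exp_le_exp.2 (by linarith)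
    have h3 : Real.sinh (|y|/2) ≤ 2.72 * (|y|/2) := by nlinarith
    have h4 : Real.sinh (|y|/2) ^ 2 ≤ (2.72 * (|y|/2)) ^ 2 :=
      pow_le_pow_left₀ hsnn h3 2
    rw [hsinh_abs]
    calc Real.sinh (|y|/2) ^ 2 ≤ (2.72 * (|y|/2)) ^ 2 := h4
      _ = 2.72^2 * (|y|/2)^2 := by ring
      _ = 2.72^2 * (y/2)^2 := by
          have hq : (|y|/2)^2 = (y/2)^2 := by rw [div_pow, div_pow, _root_.sq_abs]
          rw [hq]
  have hsinh_cap : Real.sinh (y/2) ^ 2 ≤ (1.36 : ℝ)^2 := by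
    have h1 : Real.sinh (|y|/2) ≤ Real.sinh 1 := Real.sinh_le_sinh.2 (by linarith)
    have h2 : Real.sinh 1 ≤ 1.36 := by
      rw [Real.sinh_eq]
      have := Real.exp_pos (-1 : ℝ)
      nlinarith
    have h3 : Real.sinh (|y|/2) ^ 2 ≤ 1.36 ^ 2 :=
      pow_le_pow_left₀ hsnn (h1.trans h2) 2
    rw [hsinh_abs]; exact h3
  -- lower bounds on B²
  have hsin_low : (0.1 : ℝ) * (ε*x)^2 ≤ Real.sin (ε*x/2) ^ 2 := by
    set t : ℝ := |ε*x|/2 with htdef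
    have ht0 : (0:ℝ) ≤ t := by positivity
    have ht1 : t ≤ Real.pi/2 := by rw [htdef]; linarith
    have hj : 2/Real.pi * t ≤ Real.sin t := Real.mul_le_sin ht0 ht1
    have hu : (0.634 : ℝ) ≤ 2/Real.pi := by
      rw [le_div_iff₀ hπpos]; linarith
    have h634 : 0.634 * t ≤ Real.sin t :=
      le_trans (mul_le_mul_of_nonneg_right hu ht0) hj
    have hsq : (0.634 * t)^2 ≤ Real.sin t ^ 2 :=
      pow_le_pow_left₀ (by positivity) h634 2
    have ht2 : t^2 = (ε*x)^2/4 := by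
      rw [htdef, div_pow, _root_.sq_abs]; norm_num
    have hst : Real.sin (ε*x/2) ^ 2 = Real.sin t ^ 2 := by
      rw [htdef]
      rcases abs_cases (ε*x) with ⟨h, _⟩ | ⟨h, _⟩
      · rw [h]
      · rw [h, show -(ε*x)/2 = -(ε*x/2) by ring, Real.sin_neg]; ring
    rw [hst]
    nlinarith
  have hsinh_low : (ε*y/2) ^ 2 ≤ Real.sinh (ε*y/2) ^ 2 := by
    set t : ℝ := |ε*y|/2 with htdef
    have ht0 : (0:ℝ) ≤ t := by positivity
    have h5 : t ≤ Real.sinh t := Real.self_le_sinh_iff.2 ht0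
    have hsq : t^2 ≤ Real.sinh t ^2 := pow_le_pow_left₀ ht0 h5 2
    have hst : Real.sinh (ε*y/2) ^ 2 = Real.sinh t ^ 2 := by
      rw [htdef]
      rcases abs_cases (ε*y) with ⟨h, _⟩ | ⟨h, _⟩
      · rw [h]
      · rw [h, show -(ε*y)/2 = -(ε*y/2) by ring, Real.sinh_neg]; ring
    have ht2 : t^2 = (ε*y/2)^2 := by
      rw [htdef, div_pow, _root_.sq_abs]; ring
    rw [hst, ← ht2]; exact hsq
  -- key inequality 1 : ε * A ≤ 4 * B
  have hK1 : ε * A ≤ 4 * B := by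
    have hsq : (ε*A)^2 ≤ (4*B)^2 := by
      have h1 : (4*B)^2 = 16 * (Real.sin (ε*x/2) ^ 2 + Real.sinh (ε*y/2) ^ 2) := by
        rw [← hB2]; ring
      have h2 : (ε*A)^2 = ε^2 * (Real.sin (x/2) ^ 2 + Real.sinh (y/2) ^ 2) := by
        rw [← hA2]; ring
      rw [h1, h2]
      nlinarith [hsin_low, hsinh_low, hsin1, hsinh_up, sq_nonneg (ε*x), sq_nonneg (ε*y),
        mul_nonneg (sq_nonneg ε) (sq_nonneg x), mul_nonneg (sq_nonneg ε) (sq_nonneg y), sq_nonneg ε]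
    nlinarith [mul_nonneg hε0.le hA0, hB0]
  -- key inequality 2 : ε * A * |x| ≤ 8 * B
  have hK2 : ε * A * |x| ≤ 8 * B := by
    have hy2 : y^2 ≤ 4 := by nlinarith [abs_nonneg y, _root_.sq_abs y]
    have hsq : (ε*A*|x|)^2 ≤ (8*B)^2 := by
      have h1 : (8*B)^2 = 64 * (Real.sin (ε*x/2) ^ 2 + Real.sinh (ε*y/2) ^ 2) := by
        rw [← hB2]; ring
      have h2 : (ε*A*|x|)^2 = ε^2 * x^2 * (Real.sin (x/2) ^ 2 + Real.sinh (y/2) ^ 2) := by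
        rw [← hA2, ← _root_.sq_abs x]; ring
      rw [h1, h2]
      have hA2up : Real.sin (x/2) ^ 2 + Real.sinh (y/2) ^ 2 ≤ 2.85 := by
        nlinarith [hsin2, hsinh_cap]
      nlinarith [hsin_low, hsinh_low, sq_nonneg (ε*y/2),
        mul_nonneg (sq_nonneg ε) (sq_nonneg x),
        mul_nonneg (mul_nonneg (sq_nonneg ε) (sq_nonneg x))
          (add_nonneg (sq_nonneg (Real.sin (x/2))) (sq_nonneg (Real.sinh (y/2))))]
    nlinarith [mul_nonneg (mul_nonneg hε0.le hA0) (abs_nonneg x), hB0]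
  -- now finish
  by_cases hBz : B = 0
  · rw [hBz, mul_zero, div_zero]
    split_ifs with h
    · norm_num
    · have hx0 : (0:ℝ) < |x| := abs_pos.2 h
      have h1 : (0:ℝ) < min 1 (2/|x|) := lt_min one_pos (by positivity)
      positivity
  · have hBpos : 0 < B := lt_of_le_of_ne hB0 (Ne.symm hBz)
    have hden : 0 < (1/ε) * B := by positivity
    rw [div_le_iff₀ hden]
    split_ifs with h
    · rw [mul_one]
      have h4 : A ≤ 4 * B / ε := by
        rw [le_div_iff₀ hε0]; linarith [hK1]
      calc A ≤ 4 * B / ε := h4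
        _ = 4 * (1/ε * B) := by field_simp
    · have hxpos : (0:ℝ) < |x| := abs_pos.2 h
      rcases min_cases 1 (2/|x|) with ⟨hm, _⟩ | ⟨hm, _⟩
      · rw [hm, mul_one]
        have h4 : A ≤ 4 * B / ε := by
          rw [le_div_iff₀ hε0]; linarith [hK1]
        calc A ≤ 4 * B / ε := h4
          _ = 4 * (1/ε * B) := by field_simp
      · rw [hm]
        have h8 : A ≤ 8 * B / (ε * |x|) := by
          rw [le_div_iff₀ (by positivity)]; linarith [hK2]
        calc A ≤ 8 * B / (ε * |x|) := h8
          _ = 4 * (2/|x|) * (1/ε * B) := by field_simp; ring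
end
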